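/- Let R be a commutative ring, n ≥ 1, m ≥ 1, and k integers with 1 ≤ k ≤ m, and let f, g ∈ R[X] with deg f < n+m−1 and deg g < n. Then the middle product splits as: ((f·g) quo X^{n−1}) mod X^m = ( ((f mod X^{n+k−1})·g) quo X^{n−1} ) mod X^k + X^k·( ( ((f quo X^k)·g) quo X^{n−1} ) mod X^{m−k} ). -/

import Mathlib

open Polynomial

lemma coeff_modByMonic_X_pow' {R : Type*} [CommRing R] (p : R[X]) (t i : ℕ) :
    (p %ₘ X ^ t).coeff i = if i < t then p.coeff i else 0 := by
  nontriviality R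
  have h := modByMonic_add_div p (X ^ t : R[X])
  have hdeg : (p %ₘ X ^ t).degree < (t : WithBot ℕ) := by
    simpa [degree_X_pow] using degree_modByMonic_lt p (monic_X_pow (R := R) t)
  by_cases hit : i < t
  · have := congrArg (fun q => q.coeff i) h
    simp only [coeff_add, coeff_X_pow_mul', if_neg (not_le.mpr hit), add_zero] at this
    simpa [hit] using this
  · rw [if_neg hit]
    exact coeff_eq_zero_of_degree_lt (lt_of_lt_of_le hdeg (Nat.cast_le.mpr (not_lt.mp hit)))

lemma coeff_divByMonic_X_pow' {R : Type*} [CommRing R] (p : R[X]) (t i : ℕ) :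
    (p /ₘ X ^ t).coeff i = p.coeff (i + t) := by
  nontriviality R
  have h := modByMonic_add_div p (X ^ t : R[X])
  have := congrArg (fun q => q.coeff (i + t)) h
  simp only [coeff_add, coeff_X_pow_mul', if_pos (Nat.le_add_left t i),
    Nat.add_sub_cancel] at this
  rw [coeff_modByMonic_X_pow', if_neg (by omega)] at this
  rw [zero_add] at this
  exact this

/-- For a commutative ring `R`, integers `n, m ≥ 1` and `1 ≤ k ≤ m`, and
`f g : R[X]` with `deg f < n+m−1` and `deg g < n`, the middle product splits as
`MP(f,g) = MP(f mod X^{n+k−1}, g) + X^k · MP(f quo X^k, g)` where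
`MP(f,g) = ((f·g) quo X^{n−1}) mod X^m`. -/
theorem middle_product_split
    {R : Type*} [CommRing R] (n m k : ℕ) (hn : 1 ≤ n) (hm : 1 ≤ m)
    (hk1 : 1 ≤ k) (hkm : k ≤ m)
    (f g : R[X]) (hf : f.degree < ((n + m - 1 : ℕ) : WithBot ℕ)) (hg : g.degree < n) :
    ((f * g) /ₘ X ^ (n - 1)) %ₘ X ^ m =
      (((f %ₘ X ^ (n + k - 1)) * g) /ₘ X ^ (n - 1)) %ₘ X ^ k
        + X ^ k * ((((f /ₘ X ^ k) * g) /ₘ X ^ (n - 1)) %ₘ X ^ (m - k)) := by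
  obtain ⟨N, rfl⟩ : ∃ N, n = N + 1 := ⟨n - 1, by omega⟩
  obtain ⟨d, rfl⟩ : ∃ d, m = k + d := ⟨m - k, by omega⟩
  have hN1 : N + 1 - 1 = N := by omega
  have hNk : N + 1 + k - 1 = N + k := by omega
  have hkd : k + d - k = d := by omega
  rw [hN1, hNk, hkd]
  ext i
  simp only [coeff_add, coeff_modByMonic_X_pow', coeff_divByMonic_X_pow', coeff_X_pow_mul']
  by_cases h1 : i < k
  · rw [if_pos (by omega), if_pos h1, if_neg (by omega), add_zero]
    rw [coeff_mul, coeff_mul]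
    refine Finset.sum_congr rfl fun p hp => ?_
    rw [Finset.HasAntidiagonal.mem_antidiagonal] at hp
    rw [coeff_modByMonic_X_pow', if_pos (by omega)]
  · by_cases h2 : i < k + d
    · rw [if_pos h2, if_neg h1, if_pos (by omega), if_pos (by omega), zero_add]
      have hsplit := modByMonic_add_div f (X ^ k : R[X])
      calc (f * g).coeff (i + N)
          = ((f %ₘ X ^ k) * g + X ^ k * ((f /ₘ X ^ k) * g)).coeff (i + N) := by
            rw [← mul_assoc, ← add_mul, hsplit]
        _ = ((f /ₘ X ^ k) * g).coeff (i - k + N) := by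
            rw [coeff_add, coeff_X_pow_mul', if_pos (by omega)]
            have hz : ((f %ₘ X ^ k) * g).coeff (i + N) = 0 := by
              rw [coeff_mul]
              refine Finset.sum_eq_zero fun p hp => ?_
              rw [Finset.HasAntidiagonal.mem_antidiagonal] at hp
              by_cases hx : p.1 < k
              · have : g.coeff p.2 = 0 := coeff_eq_zero_of_degree_lt
                  (lt_of_lt_of_le hg (Nat.cast_le.mpr (by omega)))
                rw [this, mul_zero]
              · rw [coeff_modByMonic_X_pow', if_neg hx, zero_mul]
            rw [hz, zero_add]
            congr 1
            omega
    · rw [if_neg h2, if_neg h1, zero_add, if_pos (by omega : k ≤ i), if_neg (by omega)]
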